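/- Let F be a finite metric space with at least two points and no focal points, let 𝒰 be a 2-covering of F with Δ(𝒰) < Δ(F), let a₁ denote the smallest and a_k the largest diameter among the members of 𝒰 (so a_k = Δ(𝒰)), and let s_𝒰 be the unique s ∈ (0,∞) with H^{s}_𝒰(F) = Δ(F)^{s}. Then ln|𝒰| / ln(Δ(F)/δ(F)) ≤ ln|𝒰| / ln(Δ(F)/a₁) ≤ s_𝒰 ≤ ln|𝒰| / ln(Δ(F)/a_k). -/
import Mathlib


open Metric

namespace FinDim

variable {X : Type*} [MetricSpace X]

/-- `ν_F(a)`: the distance from `a` to a nearest other point of `F`. -/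
noncomputable def nu (F : Finset X) (a : X) : ℝ :=
  sInf {r : ℝ | ∃ x ∈ F, x ≠ a ∧ r = dist a x}

/-- `δ(F)`: the separation of `F`, the minimum distance between distinct points. -/
noncomputable def sep (F : Finset X) : ℝ :=
  sInf {r : ℝ | ∃ x ∈ F, ∃ y ∈ F, x ≠ y ∧ r = dist x y}

/-- A 2-covering of `F`: a family of subsets of `F` covering `F`,
each member having at least two elements. -/
def IsTwoCover (F : Finset X) (U : Finset (Finset X)) : Prop :=
  (∀ V ∈ U, V ⊆ F) ∧ (∀ V ∈ U, 2 ≤ V.card) ∧ ∀ a ∈ F, ∃ V ∈ U, a ∈ V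

/-- `Δ(𝒰)`: maximum diameter of the members of the family `𝒰`. -/
noncomputable def coverDiam (U : Finset (Finset X)) : ℝ :=
  sSup {r : ℝ | ∃ V ∈ U, r = Metric.diam (V : Set X)}

/-- `∇(F)`: the covering diameter of `F`. -/
noncomputable def nablaF (F : Finset X) : ℝ :=
  sInf {r : ℝ | ∃ U : Finset (Finset X), IsTwoCover F U ∧ r = coverDiam U}

/-- `a` is a focal point of `F`. -/
def IsFocal (F : Finset X) (a : X) : Prop :=
  a ∈ F ∧ ∀ x ∈ F, x ≠ a → dist a x = Metric.diam (F : Set X)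

/-- `H^s_𝒰(F) = Σ_{U ∈ 𝒰} Δ(U)^s`. -/
noncomputable def Hcov (U : Finset (Finset X)) (s : ℝ) : ℝ :=
  ∑ V ∈ U, Metric.diam (V : Set X) ^ s

/-- `H^s(F)`: minimum of `H^s_𝒰(F)` over 2-coverings `𝒰` with `Δ(𝒰) = ∇(F)`. -/
noncomputable def HH (F : Finset X) (s : ℝ) : ℝ :=
  sInf {h : ℝ | ∃ U : Finset (Finset X),
    IsTwoCover F U ∧ coverDiam U = nablaF F ∧ h = Hcov U s}

/-- The finite Hausdorff dimension: the unique `s₀ ∈ (0,∞)` with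
`H^{s₀}(F) = Δ(F)^{s₀}` (when `F` has no focal points). -/
noncomputable def dimfH (F : Finset X) : ℝ :=
  sInf {s : ℝ | 0 < s ∧ HH F s = Metric.diam (F : Set X) ^ s}

/-- `T_{∇(F)}(F)`: the minimal cardinality of a 2-covering `𝒰` with `Δ(𝒰) = ∇(F)`. -/
noncomputable def Tmin (F : Finset X) : ℕ :=
  sInf {n : ℕ | ∃ U : Finset (Finset X),
    IsTwoCover F U ∧ coverDiam U = nablaF F ∧ U.card = n}

/-- The finite box dimension `dim_fB(F) = ln T_{∇(F)}(F) / ln (Δ(F)/∇(F))`. -/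
noncomputable def dimfB (F : Finset X) : ℝ :=
  Real.log (Tmin F) / Real.log (Metric.diam (F : Set X) / nablaF F)

/-- `ν_A(x)` for a subset `A` of a metric space. -/
noncomputable def nuSet {Z : Type*} [MetricSpace Z] (A : Set Z) (x : Z) : ℝ :=
  sInf {r : ℝ | ∃ y ∈ A, y ≠ x ∧ r = dist x y}

/-- `∇(A) = sup {ν_A(x) : x ∈ A}` for a subset `A` of a metric space. -/
noncomputable def nablaSet {Z : Type*} [MetricSpace Z] (A : Set Z) : ℝ :=
  sSup {r : ℝ | ∃ x ∈ A, r = nuSet A x}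

end FinDim

open FinDim in
/-- Bounds on the solution `s_𝒰` of `H^s_𝒰(F) = Δ(F)^s`. -/
theorem stmt5 {X : Type*} [MetricSpace X] (F : Finset X) (hF : 2 ≤ F.card)
    (hfoc : ∀ a, ¬ IsFocal F a)
    (U : Finset (Finset X)) (hU : IsTwoCover F U)
    (hUd : coverDiam U < Metric.diam (F : Set X))
    (a1 ak : ℝ)
    (ha1 : IsLeast {r : ℝ | ∃ V ∈ U, r = Metric.diam (V : Set X)} a1)
    (hak : ak = coverDiam U)
    (s : ℝ) (hs : 0 < s) (hseq : Hcov U s = Metric.diam (F : Set X) ^ s) :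
    Real.log (U.card : ℝ) / Real.log (Metric.diam (F : Set X) / sep F) ≤
      Real.log (U.card : ℝ) / Real.log (Metric.diam (F : Set X) / a1) ∧
    Real.log (U.card : ℝ) / Real.log (Metric.diam (F : Set X) / a1) ≤ s ∧
    s ≤ Real.log (U.card : ℝ) / Real.log (Metric.diam (F : Set X) / ak) := by

  classical
  obtain ⟨x0, hx0F, y0, hy0F, hxy0⟩ := Finset.one_lt_card.mp hF
  set D := Metric.diam (F : Set X) with hD
  obtain ⟨V0, hV0U, hx0V0⟩ := hU.2.2 x0 hx0F
  have hUne : U.Nonempty := ⟨V0, hV0U⟩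
  have hSfin : ({r : ℝ | ∃ V ∈ U, r = Metric.diam (V : Set X)}).Finite := by
    have h : {r : ℝ | ∃ V ∈ U, r = Metric.diam (V : Set X)} =
        (fun V : Finset X => Metric.diam (V : Set X)) '' ↑U := by
      ext r; simp [Set.mem_image, eq_comm]
    rw [h]; exact U.finite_toSet.image _
  have hle_ak : ∀ V ∈ U, Metric.diam (V : Set X) ≤ ak := by
    intro V hV
    rw [hak, coverDiam]
    exact le_csSup hSfin.bddAbove ⟨V, hV, rfl⟩
  have hge_a1 : ∀ V ∈ U, a1 ≤ Metric.diam (V : Set X) := fun V hV => ha1.2 ⟨V, hV, rfl⟩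
  obtain ⟨W, hWU, hWa1⟩ := ha1.1
  obtain ⟨u, huW, v, hvW, huv⟩ := Finset.one_lt_card.mp (hU.2.1 W hWU)
  have hduv : 0 < dist u v := dist_pos.mpr huv
  have hdle : dist u v ≤ Metric.diam (W : Set X) :=
    dist_le_diam_of_mem (Set.toFinite _).isBounded huW hvW
  have ha1pos : 0 < a1 := hWa1 ▸ lt_of_lt_of_le hduv hdle
  have ha1ak : a1 ≤ ak := le_trans (hge_a1 W hWU) (hle_ak W hWU)
  have hakpos : 0 < ak := lt_of_lt_of_le ha1pos ha1ak
  have hakD : ak < D := hak ▸ hUd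
  have ha1D : a1 < D := lt_of_le_of_lt ha1ak hakD
  have hDpos : 0 < D := lt_trans ha1pos ha1D
  have hcard : (1 : ℝ) ≤ (U.card : ℝ) := by exact_mod_cast Finset.card_pos.mpr hUne
  have hlogn : 0 ≤ Real.log (U.card : ℝ) := Real.log_nonneg hcard
  have hsum1 : (U.card : ℝ) * a1 ^ s ≤ D ^ s := by
    calc (U.card : ℝ) * a1 ^ s = ∑ _V ∈ U, a1 ^ s := by
          rw [Finset.sum_const, nsmul_eq_mul]
      _ ≤ ∑ V ∈ U, Metric.diam (V : Set X) ^ s :=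
          Finset.sum_le_sum fun V hV =>
            Real.rpow_le_rpow ha1pos.le (hge_a1 V hV) hs.le
      _ = D ^ s := hseq
  have hsum2 : D ^ s ≤ (U.card : ℝ) * ak ^ s := by
    calc D ^ s = ∑ V ∈ U, Metric.diam (V : Set X) ^ s := hseq.symm
      _ ≤ ∑ _V ∈ U, ak ^ s := Finset.sum_le_sum fun V hV =>
          Real.rpow_le_rpow Metric.diam_nonneg (hle_ak V hV) hs.le
      _ = (U.card : ℝ) * ak ^ s := by rw [Finset.sum_const, nsmul_eq_mul]
  have hloga1 : Real.log (U.card : ℝ) ≤ s * Real.log (D / a1) := by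
    have h1 : Real.log ((U.card : ℝ) * a1 ^ s) ≤ Real.log (D ^ s) :=
      Real.log_le_log (by positivity) hsum1
    rw [Real.log_mul (by positivity) (by positivity), Real.log_rpow ha1pos,
      Real.log_rpow hDpos] at h1
    rw [Real.log_div (ne_of_gt hDpos) (ne_of_gt ha1pos)]
    nlinarith
  have hlogak : s * Real.log (D / ak) ≤ Real.log (U.card : ℝ) := by
    have h1 : Real.log (D ^ s) ≤ Real.log ((U.card : ℝ) * ak ^ s) :=
      Real.log_le_log (by positivity) hsum2
    rw [Real.log_mul (by positivity) (by positivity), Real.log_rpow hakpos,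
      Real.log_rpow hDpos] at h1
    rw [Real.log_div (ne_of_gt hDpos) (ne_of_gt hakpos)]
    nlinarith
  have hlogDa1 : 0 < Real.log (D / a1) := Real.log_pos ((one_lt_div ha1pos).mpr ha1D)
  have hlogDak : 0 < Real.log (D / ak) := Real.log_pos ((one_lt_div hakpos).mpr hakD)
  refine ⟨?_, (div_le_iff₀ hlogDa1).mpr hloga1, (le_div_iff₀ hlogDak).mpr hlogak⟩
  -- sep F ≤ a1 and 0 < sep F
  set T : Set ℝ := {r : ℝ | ∃ x ∈ F, ∃ y ∈ F, x ≠ y ∧ r = dist x y} with hT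
  have hTbdd : BddBelow T := ⟨0, by rintro r ⟨x, _, y, _, _, rfl⟩; exact dist_nonneg⟩
  have hTfin : T.Finite := by
    apply Set.Finite.subset ((F ×ˢ F).image fun p => dist p.1 p.2).finite_toSet
    rintro r ⟨x, hx, y, hy, _, rfl⟩
    simp only [Finset.coe_image, Set.mem_image, Finset.mem_coe, Finset.mem_product]
    exact ⟨(x, y), ⟨hx, hy⟩, rfl⟩
  have hTne : T.Nonempty := ⟨dist u v, u, hU.1 W hWU huW, v, hU.1 W hWU hvW, huv, rfl⟩
  have hsep_le : sep F ≤ a1 := by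
    have h1 : sep F ≤ dist u v :=
      csInf_le hTbdd ⟨u, hU.1 W hWU huW, v, hU.1 W hWU hvW, huv, rfl⟩
    calc sep F ≤ dist u v := h1
      _ ≤ Metric.diam (W : Set X) := hdle
      _ = a1 := hWa1.symm
  have hsep_pos : 0 < sep F := by
    have hmem : sInf T ∈ T := hTne.csInf_mem hTfin
    obtain ⟨x, _, y, _, hxy, hEq⟩ := hmem
    rw [sep, ← hT, hEq]
    exact dist_pos.mpr hxy
  have hdivle : D / a1 ≤ D / sep F :=
    div_le_div_of_nonneg_left hDpos.le hsep_pos hsep_le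
  have hloglog : Real.log (D / a1) ≤ Real.log (D / sep F) :=
    Real.log_le_log (by positivity) hdivle
  exact div_le_div_of_nonneg_left hlogn hlogDa1 hloglog |>.trans_eq rfl
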